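/- Let Q be the inverse survival function of a nonnegative random variable Y (i.e., Q(u) = inf{y : P(Y > y) ≤ u}). If a sequence β(t) ∈ [0,1] satisfies β(t) = O(b^t) for some b ∈ (0,1) and E[Y² ln(1+Y)] < ∞, then Σ_{t=0}^∞ ∫_0^{β(t)} Q²(u) du < ∞. -/

import Mathlib

open MeasureTheory

variable {Ω : Type*} [MeasurableSpace Ω]

/-- Inverse survival function of `Y`: `Q(u) = inf { y : P(Y > y) ≤ u }`. -/
noncomputable def invSurvival (μ : Measure Ω) (Y : Ω → ℝ) (u : ℝ) : ℝ :=
  sInf {y : ℝ | (μ {ω | Y ω > y}).toReal ≤ u}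

set_option maxHeartbeats 1000000 in
/-- Geometric mixing case of the mixing–moment trade-off: if `β(t) = O(bᵗ)` for some
`b ∈ (0,1)`, `β(t) ∈ [0,1]`, and `E[Y² ln(1+Y)] < ∞` for a nonnegative random
variable `Y` with inverse survival function `Q`, then
`Σ_{t=0}^∞ ∫_0^{β(t)} Q²(u) du < ∞`. -/
theorem geometric_mixing_summable
    (μ : Measure Ω) [IsProbabilityMeasure μ] (Y : Ω → ℝ)
    (hY : Measurable Y) (hY0 : ∀ ω, 0 ≤ Y ω)
    (β : ℕ → ℝ) (hβ01 : ∀ t, β t ∈ Set.Icc (0 : ℝ) 1)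
    (b : ℝ) (hb : b ∈ Set.Ioo (0 : ℝ) 1) (C : ℝ)
    (hgeo : ∀ t, β t ≤ C * b ^ t)
    (hmom : Integrable (fun ω => (Y ω) ^ 2 * Real.log (1 + Y ω)) μ) :
    Summable (fun t => ∫ u in (0 : ℝ)..(β t), (invSurvival μ Y u) ^ 2) := by
  classical
  obtain ⟨hb0, hb1⟩ := hb
  set Q : ℝ → ℝ := invSurvival μ Y with hQdef
  set S : ℝ → ℝ := fun y => (μ {ω | Y ω > y}).toReal with hSdef
  have hQS : ∀ u, Q u = sInf {y | S y ≤ u} := fun u => rfl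
  -- ### Basic properties of Q and S
  have hSle1 : ∀ y, S y ≤ 1 := by
    intro y
    have h1 : μ {ω | Y ω > y} ≤ 1 := (measure_mono (Set.subset_univ _)).trans_eq measure_univ
    have := ENNReal.toReal_mono (by simp) h1
    simpa [hSdef] using this
  have hsetsub : ∀ {u : ℝ}, u < 1 → {y | S y ≤ u} ⊆ Set.Ici 0 := by
    intro u hu y hy
    by_contra hyneg
    have hyneg' : y < 0 := not_le.mp hyneg
    have huniv : {ω | Y ω > y} = Set.univ :=
      Set.eq_univ_of_forall fun ω => lt_of_lt_of_le hyneg' (hY0 ω)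
    have hSy1 : S y = 1 := by rw [hSdef]; simp [huniv]
    have hy' : S y ≤ u := hy
    rw [hSy1] at hy'; linarith
  have hQ1 : ∀ {u : ℝ}, (1:ℝ) ≤ u → Q u = 0 := by
    intro u hu
    have huniv : {y | S y ≤ u} = Set.univ := Set.eq_univ_of_forall fun y => (hSle1 y).trans hu
    rw [hQS, huniv]
    apply Real.sInf_of_not_bddBelow
    rintro ⟨c, hc⟩
    have := hc (Set.mem_univ (c - 1))
    linarith
  have hQnonneg : ∀ u, 0 ≤ Q u := by
    intro u
    rcases lt_or_ge u 1 with h | h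
    · exact Real.sInf_nonneg fun x hx => hsetsub h hx
    · rw [hQ1 h]
  have hQle : ∀ {u y : ℝ}, 0 ≤ y → S y ≤ u → Q u ≤ y := by
    intro u y hy hSy
    rcases lt_or_ge u 1 with h | h
    · exact csInf_le ⟨0, fun x hx => hsetsub h hx⟩ hSy
    · rw [hQ1 h]; exact hy
  have hlt : ∀ {u y : ℝ}, 0 ≤ y → y < Q u → u < S y := by
    intro u y hy hq
    by_contra h
    exact absurd (hQle hy (not_lt.mp h)) (not_le.mpr hq)
  have hne : ∀ u : ℝ, 0 < u → ∃ y : ℝ, 0 ≤ y ∧ S y ≤ u := by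
    intro u hu
    have hmeas : ∀ n : ℕ, NullMeasurableSet {ω | Y ω > (n:ℝ)} μ := fun n =>
      (measurableSet_lt measurable_const hY).nullMeasurableSet
    have hanti : Antitone fun n : ℕ => {ω | Y ω > (n:ℝ)} := fun n m h ω hω =>
      show (n:ℝ) < Y ω from lt_of_le_of_lt (Nat.cast_le.mpr h) hω
    have hint : ⋂ n : ℕ, {ω | Y ω > (n:ℝ)} = ∅ := by
      apply Set.eq_empty_iff_forall_notMem.mpr
      intro ω hω
      obtain ⟨n, hn⟩ := exists_nat_gt (Y ω)
      exact absurd (Set.mem_iInter.mp hω n) (not_lt.mpr hn.le)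
    have htend := tendsto_measure_iInter_atTop hmeas hanti ⟨0, measure_ne_top μ _⟩
    rw [hint, measure_empty] at htend
    have hev := htend.eventually_lt_const (ENNReal.ofReal_pos.mpr hu)
    obtain ⟨n, hn⟩ := hev.exists
    refine ⟨n, Nat.cast_nonneg n, ?_⟩
    rw [hSdef]
    exact ENNReal.toReal_le_of_le_ofReal hu.le hn.le
  have hQanti : AntitoneOn Q (Set.Ioc (0:ℝ) 1) := by
    intro u hu v hv huv
    rcases lt_or_ge v 1 with h | h
    · apply csInf_le_csInf ⟨0, fun x hx => hsetsub h hx⟩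
      · obtain ⟨y, hy0, hyS⟩ := hne u hu.1
        exact ⟨y, hyS⟩
      · exact fun x hx => le_trans hx huv
    · rw [hQ1 h]; exact hQnonneg u
  have hQaem : AEMeasurable Q (volume.restrict (Set.Ioc (0:ℝ) 1)) :=
    aemeasurable_restrict_of_antitoneOn measurableSet_Ioc hQanti
  -- ### The moment function g
  set g : ℝ → ℝ := fun y => y ^ 2 * (1 + 4 * Real.log (1 + y)) with hgdef
  have hgnn : ∀ y : ℝ, 0 ≤ y → 0 ≤ g y := by
    intro y hy
    have hl : 0 ≤ Real.log (1 + y) := Real.log_nonneg (by linarith)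
    rw [hgdef]; positivity
  have hgs : ∀ a c : ℝ, 0 ≤ a → a < c → g a < g c := by
    intro a c ha hac
    have hla : 0 ≤ Real.log (1 + a) := Real.log_nonneg (by linarith)
    have hlb : 0 ≤ Real.log (1 + c) := Real.log_nonneg (by linarith)
    have hll : Real.log (1 + a) ≤ Real.log (1 + c) :=
      Real.log_le_log (by linarith) (by linarith)
    have hsq : a ^ 2 < c ^ 2 := by nlinarith
    rw [hgdef]
    simp only
    nlinarith [sq_nonneg a, sq_nonneg c]
  have hgmeas : Measurable g := by
    apply Measurable.mul
    · exact measurable_id.pow_const 2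
    · exact ((Real.measurable_log.comp (measurable_const.add measurable_id)).const_mul 4).const_add 1
  have hgcont : ∀ z : ℝ, ContinuousOn g (Set.Icc 0 z) := by
    intro z
    apply ContinuousOn.mul (Continuous.continuousOn (by continuity))
    have hlog : ContinuousOn (fun y : ℝ => Real.log (1 + y)) (Set.Icc 0 z) := by
      apply Real.continuousOn_log.comp ((continuous_const.add continuous_id).continuousOn)
      intro y hy
      simp only [Set.mem_compl_iff, Set.mem_singleton_iff]
      have := hy.1
      intro h
      simp only [Pi.add_apply, id] at h
      linarith
    exact continuousOn_const.add (continuousOn_const.mul hlog)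
  -- ### Integrability of g ∘ Y
  have hL2 : (0:ℝ) < Real.log 2 := Real.log_pos (by norm_num)
  have hY2 : Integrable (fun ω => Y ω ^ 2) μ := by
    apply Integrable.mono' ((integrable_const (1:ℝ)).add (hmom.const_mul (Real.log 2)⁻¹))
      ((hY.pow_const 2).aestronglyMeasurable)
    apply Filter.Eventually.of_forall
    intro ω
    have h0 := hY0 ω
    have hnn : 0 ≤ Real.log (1 + Y ω) := Real.log_nonneg (by linarith)
    rw [Real.norm_eq_abs, abs_of_nonneg (sq_nonneg _)]
    rcases le_or_gt 1 (Y ω) with h | h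
    · have hlog : Real.log 2 ≤ Real.log (1 + Y ω) := Real.log_le_log (by norm_num) (by linarith)
      have h3 : Y ω ^ 2 * Real.log 2 ≤ Y ω ^ 2 * Real.log (1 + Y ω) :=
        mul_le_mul_of_nonneg_left hlog (sq_nonneg _)
      have h4 : (Real.log 2)⁻¹ * (Y ω ^ 2 * Real.log 2) ≤
          (Real.log 2)⁻¹ * (Y ω ^ 2 * Real.log (1 + Y ω)) :=
        mul_le_mul_of_nonneg_left h3 (inv_nonneg.mpr hL2.le)
      have h5 : (Real.log 2)⁻¹ * (Y ω ^ 2 * Real.log 2) = Y ω ^ 2 := by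
        field_simp
      simp only [Pi.add_apply]
      linarith
    · have h1 : Y ω ^ 2 ≤ 1 := by nlinarith
      have h2 : 0 ≤ (Real.log 2)⁻¹ * (Y ω ^ 2 * Real.log (1 + Y ω)) := by positivity
      simp only [Pi.add_apply]
      linarith
  have hgYint : Integrable (fun ω => g (Y ω)) μ := by
    have h2 : (fun ω => g (Y ω)) = fun ω => Y ω ^ 2 + 4 * (Y ω ^ 2 * Real.log (1 + Y ω)) := by
      funext ω; rw [hgdef]; ring
    rw [h2]
    exact hY2.add (hmom.const_mul 4)
  set J : ENNReal := ∫⁻ ω, ENNReal.ofReal (g (Y ω)) ∂μ with hJdef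
  have hJ : J < ⊤ := by
    rw [hJdef]
    calc ∫⁻ ω, ENNReal.ofReal (g (Y ω)) ∂μ ≤ ∫⁻ ω, (‖g (Y ω)‖₊ : ENNReal) ∂μ := by
          apply lintegral_mono
          intro ω
          simp only
          rw [← enorm_eq_nnnorm, Real.enorm_eq_ofReal_abs]
          exact ENNReal.ofReal_le_ofReal (le_abs_self _)
      _ < ⊤ := hgYint.hasFiniteIntegral
  -- ### Layercake comparison: ∫_{(0,1]} g(Q u) du ≤ J
  have hQgaem : AEMeasurable (fun u => g (Q u)) (volume.restrict (Set.Ioc (0:ℝ) 1)) :=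
    hgmeas.comp_aemeasurable hQaem
  have hlayQ : ∫⁻ u in Set.Ioc (0:ℝ) 1, ENNReal.ofReal (g (Q u))
      = ∫⁻ s in Set.Ioi (0:ℝ), (volume.restrict (Set.Ioc (0:ℝ) 1)) {u | s < g (Q u)} :=
    lintegral_eq_lintegral_meas_lt _ (Filter.Eventually.of_forall fun u => hgnn _ (hQnonneg u))
      hQgaem
  have hmb : ∀ s ∈ Set.Ioi (0:ℝ),
      (volume.restrict (Set.Ioc (0:ℝ) 1)) {u | s < g (Q u)} ≤ μ {ω | s < g (Y ω)} := by
    intro s hs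
    rw [Set.mem_Ioi] at hs
    obtain ⟨y, hy_mem, hgy⟩ : ∃ y ∈ Set.Icc (0:ℝ) (s+1), g y = s := by
      have h0 : g 0 = 0 := by rw [hgdef]; simp
      have hlog : 0 ≤ Real.log (1 + (s+1)) := Real.log_nonneg (by linarith)
      have hs1 : s ≤ g (s+1) := by
        rw [hgdef]; simp only; nlinarith [sq_nonneg s, sq_nonneg (s+1)]
      have hmem : s ∈ Set.Icc (g 0) (g (s+1)) := by rw [h0]; exact ⟨hs.le, hs1⟩
      obtain ⟨y, hy, hgy⟩ := intermediate_value_Icc (by linarith : (0:ℝ) ≤ s+1) (hgcont (s+1)) hmem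
      exact ⟨y, hy, hgy⟩
    have hy0 : 0 ≤ y := hy_mem.1
    calc (volume.restrict (Set.Ioc (0:ℝ) 1)) {u | s < g (Q u)}
        = volume ({u | s < g (Q u)} ∩ Set.Ioc 0 1) := Measure.restrict_apply' measurableSet_Ioc
      _ ≤ volume (Set.Ioo 0 (S y)) := by
          apply measure_mono
          rintro u ⟨hu1, hu2⟩
          have hyQ : y < Q u := by
            by_contra h
            push_neg at h
            have hle : g (Q u) ≤ g y := by
              rcases eq_or_lt_of_le h with heq | hlt'
              · rw [heq]
              · exact (hgs _ _ (hQnonneg u) hlt').le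
            rw [hgy] at hle
            exact absurd hu1 (not_lt.mpr hle)
          exact ⟨hu2.1, hlt hy0 hyQ⟩
      _ = ENNReal.ofReal (S y) := by rw [Real.volume_Ioo, sub_zero]
      _ ≤ μ {ω | s < g (Y ω)} := by
          have he : ENNReal.ofReal (S y) = μ {ω | Y ω > y} := by
            rw [hSdef]; exact ENNReal.ofReal_toReal (measure_ne_top μ _)
          rw [he]
          apply measure_mono
          intro ω hω
          show s < g (Y ω)
          rw [← hgy]
          exact hgs y (Y ω) hy0 hω
  have hlayY : ∫⁻ s in Set.Ioi (0:ℝ), μ {ω | s < g (Y ω)}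
      = ∫⁻ ω, ENNReal.ofReal (g (Y ω)) ∂μ :=
    (lintegral_eq_lintegral_meas_lt μ (Filter.Eventually.of_forall fun ω => hgnn _ (hY0 ω))
      (hgmeas.comp hY).aemeasurable).symm
  have hQgJ : ∫⁻ u in Set.Ioc (0:ℝ) 1, ENNReal.ofReal (g (Q u)) ≤ J := by
    rw [hlayQ, hJdef, ← hlayY]
    exact lintegral_mono_ae ((ae_restrict_mem measurableSet_Ioi).mono hmb)
  -- ### the pointwise inequality
  have hptwise : ∀ u ∈ Set.Ioc (0:ℝ) 1,
      (1 - Real.log u) * Q u ^ 2 ≤ 5 * u ^ (-3/4 : ℝ) + g (Q u) := by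
    rintro u ⟨hu0, hu1⟩
    have hq := hQnonneg u
    have hlogu : Real.log u ≤ 0 := Real.log_nonpos hu0.le hu1
    have hgQ : 0 ≤ g (Q u) := hgnn _ hq
    rcases le_or_gt (Q u) (u ^ (-(1/4) : ℝ)) with h | h
    · have hpow : (u ^ (-(1/4):ℝ)) ^ 2 = u ^ (-(1/2):ℝ) := by
        rw [sq, ← Real.rpow_add hu0]; norm_num
      have hq2 : Q u ^ 2 ≤ u ^ (-(1/2):ℝ) := by
        rw [← hpow]; exact pow_le_pow_left₀ hq h 2
      have hrp : (0:ℝ) < u ^ (-(1/4):ℝ) := Real.rpow_pos_of_pos hu0 _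
      have hlog4 : -Real.log u ≤ 4 * u ^ (-(1/4):ℝ) := by
        have h1 : Real.log (u ^ (-(1/4):ℝ)) = -(1/4) * Real.log u := Real.log_rpow hu0 _
        have h2 : Real.log (u ^ (-(1/4):ℝ)) ≤ u ^ (-(1/4):ℝ) :=
          (Real.log_le_sub_one_of_pos hrp).trans (by linarith)
        linarith
      have hone : (1:ℝ) ≤ u ^ (-(1/4):ℝ) := by
        have := Real.rpow_le_rpow_of_exponent_ge hu0 hu1 (by norm_num : (-(1/4):ℝ) ≤ 0)
        rwa [Real.rpow_zero] at this
      have hmul : u ^ (-(1/4):ℝ) * u ^ (-(1/2):ℝ) = u ^ (-3/4:ℝ) := by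
        rw [← Real.rpow_add hu0]; norm_num
      calc (1 - Real.log u) * Q u ^ 2 ≤ (1 - Real.log u) * u ^ (-(1/2):ℝ) :=
            mul_le_mul_of_nonneg_left hq2 (by linarith)
        _ ≤ (5 * u ^ (-(1/4):ℝ)) * u ^ (-(1/2):ℝ) :=
            mul_le_mul_of_nonneg_right (by linarith) (Real.rpow_pos_of_pos hu0 _).le
        _ = 5 * u ^ (-3/4:ℝ) := by rw [mul_assoc, hmul]
        _ ≤ 5 * u ^ (-3/4:ℝ) + g (Q u) := le_add_of_nonneg_right hgQ
    · have hrp : (0:ℝ) < u ^ (-(1/4):ℝ) := Real.rpow_pos_of_pos hu0 _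
      have hlg : -Real.log u ≤ 4 * Real.log (1 + Q u) := by
        have h1 : Real.log (u ^ (-(1/4):ℝ)) = -(1/4) * Real.log u := Real.log_rpow hu0 _
        have h2 : Real.log (u ^ (-(1/4):ℝ)) ≤ Real.log (1 + Q u) :=
          Real.log_le_log hrp (by linarith)
        linarith
      have hbnd : (1 - Real.log u) ≤ 1 + 4 * Real.log (1 + Q u) := by linarith
      have hpos : (0:ℝ) ≤ 5 * u ^ (-3/4:ℝ) := by positivity
      calc (1 - Real.log u) * Q u ^ 2 ≤ (1 + 4 * Real.log (1 + Q u)) * Q u ^ 2 :=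
            mul_le_mul_of_nonneg_right hbnd (sq_nonneg _)
        _ = g (Q u) := by rw [hgdef]; ring
        _ ≤ 5 * u ^ (-3/4:ℝ) + g (Q u) := le_add_of_nonneg_left hpos
  -- ### rpow integral finite
  have hI5 : ∫⁻ u in Set.Ioc (0:ℝ) 1, ENNReal.ofReal (5 * u ^ (-3/4 : ℝ)) < ⊤ := by
    have hint : IntegrableOn (fun u : ℝ => 5 * u ^ (-3/4:ℝ)) (Set.Ioc 0 1) := by
      have h := intervalIntegral.intervalIntegrable_rpow' (a := (0:ℝ)) (b := 1)
        (show (-1:ℝ) < -3/4 by norm_num)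
      rw [intervalIntegrable_iff, Set.uIoc_of_le zero_le_one] at h
      exact h.const_mul 5
    calc ∫⁻ u in Set.Ioc (0:ℝ) 1, ENNReal.ofReal (5 * u ^ (-3/4 : ℝ))
        ≤ ∫⁻ u in Set.Ioc (0:ℝ) 1, (‖5 * u ^ (-3/4 : ℝ)‖₊ : ENNReal) := by
          apply lintegral_mono
          intro u
          simp only
          rw [← enorm_eq_nnnorm, Real.enorm_eq_ofReal_abs]
          exact ENNReal.ofReal_le_ofReal (le_abs_self _)
      _ < ⊤ := hint.hasFiniteIntegral
  -- ### geometric counting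
  set C' : ℝ := max C 1 with hC'def
  have hC1 : (1:ℝ) ≤ C' := le_max_right _ _
  have hgeo' : ∀ t, β t ≤ C' * b ^ t := fun t =>
    (hgeo t).trans (mul_le_mul_of_nonneg_right (le_max_left _ _) (pow_nonneg hb0.le t))
  set Lb : ℝ := -Real.log b with hLbdef
  have hLb : 0 < Lb := by
    have := Real.log_neg hb0 hb1
    rw [hLbdef]; linarith
  have hlC : 0 ≤ Real.log C' := Real.log_nonneg hC1
  set K : ℝ := 1 + Real.log C' / Lb + 1 / Lb with hKdef
  have hK0 : 0 ≤ K := by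
    have h1 : 0 ≤ Real.log C' / Lb := div_nonneg hlC hLb.le
    have h2 : 0 ≤ 1 / Lb := by positivity
    rw [hKdef]; linarith
  have hcount : ∀ u ∈ Set.Ioc (0:ℝ) 1, ∀ n : ℕ,
      (((Finset.range n).filter fun t => u ≤ β t).card : ℝ) ≤ K * (1 - Real.log u) := by
    rintro u ⟨hu0, hu1⟩ n
    have hC0 : (0:ℝ) < C' := lt_of_lt_of_le zero_lt_one hC1
    set R : ℝ := Real.log (C' / u) / Lb with hRdef
    have hR0 : 0 ≤ R := by
      apply div_nonneg _ hLb.le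
      apply Real.log_nonneg
      rw [le_div_iff₀ hu0]; linarith
    have hsub : (Finset.range n).filter (fun t => u ≤ β t) ⊆ Finset.range (Nat.floor R + 1) := by
      intro t ht
      rw [Finset.mem_filter] at ht
      obtain ⟨-, hut⟩ := ht
      rw [Finset.mem_range]
      have hbt : u ≤ C' * b ^ t := hut.trans (hgeo' t)
      have hlog : Real.log u ≤ Real.log C' + t * Real.log b := by
        have h1 := Real.log_le_log hu0 hbt
        rwa [Real.log_mul (ne_of_gt hC0) (ne_of_gt (pow_pos hb0 t)), Real.log_pow] at h1
      have htR : (t:ℝ) ≤ R := by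
        rw [hRdef, le_div_iff₀ hLb, Real.log_div (ne_of_gt hC0) (ne_of_gt hu0)]
        have he : (t:ℝ) * Lb = -(t * Real.log b) := by rw [hLbdef]; ring
        rw [he]
        linarith
      exact Nat.lt_succ_of_le (Nat.le_floor htR)
    have hcard : (((Finset.range n).filter fun t => u ≤ β t).card : ℝ) ≤ R + 1 := by
      have h1 := Finset.card_le_card hsub
      rw [Finset.card_range] at h1
      have h2 : ((Nat.floor R + 1 : ℕ) : ℝ) ≤ R + 1 := by
        push_cast; linarith [Nat.floor_le hR0]
      exact le_trans (Nat.cast_le.mpr h1) h2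
    have hnlu : 0 ≤ -Real.log u := neg_nonneg.mpr (Real.log_nonpos hu0.le hu1)
    have hA : 0 ≤ Real.log C' / Lb := div_nonneg hlC hLb.le
    have hBp : 0 < 1 / Lb := by positivity
    have hsplit : R = Real.log C' / Lb + (-Real.log u) * (1 / Lb) := by
      rw [hRdef, Real.log_div (ne_of_gt hC0) (ne_of_gt hu0)]; ring
    have hfin : R + 1 ≤ K * (1 - Real.log u) := by
      rw [hsplit, hKdef]
      nlinarith [mul_nonneg hA hnlu, mul_nonneg hnlu hBp.le]
    linarith
  -- ### assembling in ℝ≥0∞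
  set W : ℝ → ENNReal := fun u => ENNReal.ofReal (Q u ^ 2) with hWdef
  have hsubt : ∀ t, Set.Ioc (0:ℝ) (β t) ⊆ Set.Ioc 0 1 := fun t u hu =>
    ⟨hu.1, hu.2.trans (hβ01 t).2⟩
  have hrestrict : ∀ t : ℕ, volume.restrict (Set.Ioc (0:ℝ) (β t))
      = (volume.restrict (Set.Ioc (0:ℝ) 1)).restrict (Set.Ioc 0 (β t)) := by
    intro t
    rw [Measure.restrict_restrict measurableSet_Ioc, Set.inter_eq_left.mpr (hsubt t)]
  have hQt : ∀ t : ℕ, AEMeasurable Q (volume.restrict (Set.Ioc (0:ℝ) (β t))) := by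
    intro t
    rw [hrestrict t]
    exact hQaem.restrict
  have hWt : ∀ t : ℕ, AEMeasurable W (volume.restrict (Set.Ioc (0:ℝ) (β t))) := fun t =>
    ENNReal.measurable_ofReal.comp_aemeasurable ((hQt t).pow aemeasurable_const)
  have hWaem : AEMeasurable W (volume.restrict (Set.Ioc (0:ℝ) 1)) :=
    ENNReal.measurable_ofReal.comp_aemeasurable (hQaem.pow aemeasurable_const)
  set L : ℕ → ENNReal := fun t => ∫⁻ u in Set.Ioc (0:ℝ) (β t), W u with hLdef
  set B' : ENNReal := ENNReal.ofReal K *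
    ((∫⁻ u in Set.Ioc (0:ℝ) 1, ENNReal.ofReal (5 * u ^ (-3/4 : ℝ))) + J) with hB'def
  -- C1 : interval integrals as toReal of L
  have hfL : ∀ t : ℕ, (∫ u in (0:ℝ)..(β t), Q u ^ 2) = (L t).toReal := by
    intro t
    rw [intervalIntegral.integral_of_le (hβ01 t).1]
    rw [integral_eq_lintegral_of_nonneg_ae (Filter.Eventually.of_forall fun u => sq_nonneg _)
      ((hQt t).pow aemeasurable_const).aestronglyMeasurable]
  -- inner bound
  have hB : ∫⁻ u in Set.Ioc (0:ℝ) 1, ENNReal.ofReal (K * (1 - Real.log u)) * W u ≤ B' := by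
    have hpt : ∀ u ∈ Set.Ioc (0:ℝ) 1, ENNReal.ofReal (K * (1 - Real.log u)) * W u
        ≤ ENNReal.ofReal K * (ENNReal.ofReal (5 * u ^ (-3/4:ℝ)) + ENNReal.ofReal (g (Q u))) := by
      intro u hu
      rw [ENNReal.ofReal_mul hK0, mul_assoc]
      apply mul_le_mul_right
      have h1mlog : 0 ≤ 1 - Real.log u := by
        have := Real.log_nonpos hu.1.le hu.2
        linarith
      rw [hWdef]
      simp only
      rw [← ENNReal.ofReal_mul h1mlog,
        ← ENNReal.ofReal_add (mul_nonneg (by norm_num) (Real.rpow_nonneg hu.1.le _))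
          (hgnn _ (hQnonneg u))]
      exact ENNReal.ofReal_le_ofReal (hptwise u hu)
    calc ∫⁻ u in Set.Ioc (0:ℝ) 1, ENNReal.ofReal (K * (1 - Real.log u)) * W u
        ≤ ∫⁻ u in Set.Ioc (0:ℝ) 1, ENNReal.ofReal K *
            (ENNReal.ofReal (5 * u ^ (-3/4:ℝ)) + ENNReal.ofReal (g (Q u))) :=
          lintegral_mono_ae ((ae_restrict_mem measurableSet_Ioc).mono hpt)
      _ = ENNReal.ofReal K * ∫⁻ u in Set.Ioc (0:ℝ) 1,
            (ENNReal.ofReal (5 * u ^ (-3/4:ℝ)) + ENNReal.ofReal (g (Q u))) :=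
          lintegral_const_mul' _ _ ENNReal.ofReal_ne_top
      _ = ENNReal.ofReal K * ((∫⁻ u in Set.Ioc (0:ℝ) 1, ENNReal.ofReal (5 * u ^ (-3/4:ℝ)))
            + ∫⁻ u in Set.Ioc (0:ℝ) 1, ENNReal.ofReal (g (Q u))) := by
          rw [lintegral_add_left]
          exact ENNReal.measurable_ofReal.comp ((measurable_id.pow (measurable_const)).const_mul 5)
      _ ≤ B' := by
          rw [hB'def]
          exact mul_le_mul_right (add_le_add_right hQgJ _) _
  -- C2 : partial sums of L bounded by B'
  have hsum : ∀ n : ℕ, ∑ t ∈ Finset.range n, L t ≤ B' := by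
    intro n
    have h1 : ∀ t : ℕ, L t = ∫⁻ u, (Set.Ioc (0:ℝ) (β t)).indicator W u := by
      intro t
      rw [hLdef]
      exact (lintegral_indicator measurableSet_Ioc W).symm
    calc ∑ t ∈ Finset.range n, L t
        = ∑ t ∈ Finset.range n, ∫⁻ u, (Set.Ioc (0:ℝ) (β t)).indicator W u :=
          Finset.sum_congr rfl fun t _ => h1 t
      _ = ∫⁻ u, ∑ t ∈ Finset.range n, (Set.Ioc (0:ℝ) (β t)).indicator W u :=
          (lintegral_finset_sum' _ fun t _ =>
            (aemeasurable_indicator_iff measurableSet_Ioc).mpr (hWt t)).symm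
      _ ≤ ∫⁻ u, (Set.Ioc (0:ℝ) 1).indicator
            (fun u => ENNReal.ofReal (K * (1 - Real.log u)) * W u) u := by
          apply lintegral_mono
          intro u
          show (∑ t ∈ Finset.range n, (Set.Ioc (0:ℝ) (β t)).indicator W u)
            ≤ (Set.Ioc (0:ℝ) 1).indicator
                (fun u => ENNReal.ofReal (K * (1 - Real.log u)) * W u) u
          by_cases hu : u ∈ Set.Ioc (0:ℝ) 1
          · rw [Set.indicator_of_mem hu]
            have hsum_eq : ∑ t ∈ Finset.range n, (Set.Ioc (0:ℝ) (β t)).indicator W u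
                = (((Finset.range n).filter fun t => u ≤ β t).card : ENNReal) * W u := by
              have : ∀ t ∈ Finset.range n, (Set.Ioc (0:ℝ) (β t)).indicator W u
                  = if u ≤ β t then W u else 0 := by
                intro t _
                rw [Set.indicator_apply]
                congr 1
                simp [Set.mem_Ioc, hu.1]
              rw [Finset.sum_congr rfl this, ← Finset.sum_filter, Finset.sum_const,
                nsmul_eq_mul]
            rw [hsum_eq]
            apply mul_le_mul_left
            rw [← ENNReal.ofReal_natCast]
            exact ENNReal.ofReal_le_ofReal (hcount u hu n)
          · rw [Set.indicator_of_notMem hu]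
            have hz : ∀ t ∈ Finset.range n, (Set.Ioc (0:ℝ) (β t)).indicator W u = 0 :=
              fun t _ => Set.indicator_of_notMem (fun hmem => hu (hsubt t hmem)) _
            rw [Finset.sum_eq_zero hz]
      _ = ∫⁻ u in Set.Ioc (0:ℝ) 1, ENNReal.ofReal (K * (1 - Real.log u)) * W u :=
          lintegral_indicator measurableSet_Ioc _
      _ ≤ B' := hB
  have hB'top : B' ≠ ⊤ := by
    rw [hB'def]
    exact ENNReal.mul_ne_top ENNReal.ofReal_ne_top (ENNReal.add_ne_top.mpr ⟨hI5.ne, hJ.ne⟩)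
  have hLne : ∀ t, L t ≠ ⊤ := by
    intro t
    apply ne_top_of_le_ne_top hB'top
    exact le_trans (Finset.single_le_sum (f := L) (fun i _ => zero_le)
      (Finset.self_mem_range_succ t)) (hsum (t+1))
  -- ### conclusion
  apply summable_of_sum_range_le (c := B'.toReal)
  · intro t
    exact intervalIntegral.integral_nonneg (hβ01 t).1 fun u _ => sq_nonneg _
  · intro n
    calc ∑ t ∈ Finset.range n, ∫ u in (0:ℝ)..(β t), Q u ^ 2
        = ∑ t ∈ Finset.range n, (L t).toReal := Finset.sum_congr rfl fun t _ => hfL t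
      _ = (∑ t ∈ Finset.range n, L t).toReal := (ENNReal.toReal_sum fun t _ => hLne t).symm
      _ ≤ B'.toReal := ENNReal.toReal_mono hB'top (hsum n)
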